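/- Let φ : ℂ^{n−1} → ℂ be holomorphic at z₀ = x₀ + i y₀ (x₀, y₀ ∈ ℝ^{n−1}), and write φ(x+iy) = φ₁(x,y) + i φ₂(x,y) with φ₁, φ₂ real-valued. Then for all s, t ∈ ℝ, the absolute value of the determinant of the 2(n−1) × 2(n−1) real Hessian matrix of the function (x,y) ↦ s φ₁(x,y) + t φ₂(x,y) at (x₀,y₀) equals (s² + t²)^{n−1} · |det Hφ(z₀)|². -/

import Mathlib

noncomputable section

/-- The complex Hessian `Hφ(z) = [∂_{z_i} ∂_{z_j} φ (z)]`. -/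
def cHessian {d : ℕ} (φ : (Fin d → ℂ) → ℂ) (z : Fin d → ℂ) :
    Matrix (Fin d) (Fin d) ℂ :=
  Matrix.of fun i j =>
    fderiv ℂ (fun u => fderiv ℂ φ u (Pi.single j 1)) z (Pi.single i 1)

/-- Identification of `(x, y) ∈ ℝ^d × ℝ^d` with `x + i y ∈ ℂ^d`. -/
def toC {d : ℕ} (p : (Fin d → ℝ) × (Fin d → ℝ)) : Fin d → ℂ :=
  fun l => (p.1 l : ℂ) + (p.2 l : ℂ) * Complex.I

/-- Standard basis vectors of `ℝ^d × ℝ^d`, the `x`-directions indexed by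
`Sum.inl` and the `y`-directions by `Sum.inr`. -/
def stdBasis {d : ℕ} : (Fin d ⊕ Fin d) → (Fin d → ℝ) × (Fin d → ℝ)
  | Sum.inl i => (Pi.single i 1, 0)
  | Sum.inr i => (0, Pi.single i 1)

/-- The real Hessian of `g : ℝ^d × ℝ^d → ℝ` at a point, as a
`2d × 2d` matrix in the variables `(x_1, …, x_d, y_1, …, y_d)`. -/
def realHessian {d : ℕ} (g : (Fin d → ℝ) × (Fin d → ℝ) → ℝ)
    (p : (Fin d → ℝ) × (Fin d → ℝ)) : Matrix (Fin d ⊕ Fin d) (Fin d ⊕ Fin d) ℝ :=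
  Matrix.of fun a b =>
    fderiv ℝ (fun q => fderiv ℝ g q (stdBasis b)) p (stdBasis a)

lemma detC {d : ℕ} (A B : Matrix (Fin d) (Fin d) ℂ) :
    (Matrix.fromBlocks A (-B) B A).det = (A - Complex.I • B).det * (A + Complex.I • B).det := by
  classical
  set P : Matrix (Fin d ⊕ Fin d) (Fin d ⊕ Fin d) ℂ :=
    Matrix.fromBlocks 1 1 (Complex.I • 1) (-(Complex.I • 1)) with hP
  have key : Matrix.fromBlocks A (-B) B A * P
      = P * Matrix.fromBlocks (A - Complex.I • B) 0 0 (A + Complex.I • B) := by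
    simp only [hP, Matrix.fromBlocks_multiply, Matrix.mul_one, Matrix.one_mul,
      Matrix.mul_smul, Matrix.smul_mul, Matrix.mul_zero, Matrix.zero_mul,
      Matrix.mul_neg, Matrix.neg_mul, add_zero, zero_add,
      smul_sub, smul_add, smul_smul, Complex.I_mul_I, neg_one_smul, neg_neg,
      sub_neg_eq_add, neg_smul]
    ext (i|i) (j|j) <;>
      simp [Matrix.fromBlocks, Matrix.sub_apply, Matrix.add_apply, Matrix.neg_apply,
        Matrix.smul_apply, smul_eq_mul] <;> ring
  have hPdet : P.det = (-(2 * Complex.I)) ^ d * 1 := by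
    rw [hP, Matrix.det_fromBlocks_one₁₁]
    have : -(Complex.I • (1 : Matrix (Fin d) (Fin d) ℂ)) - Complex.I • 1 * 1
        = (-(2 * Complex.I)) • 1 := by
      rw [Matrix.mul_one]
      ext i j
      simp [Matrix.smul_apply, Matrix.one_apply]
      split <;> ring
    rw [this, Matrix.det_smul, Matrix.det_one, Fintype.card_fin]
  have hPne : P.det ≠ 0 := by
    rw [hPdet]
    simp [Complex.I_ne_zero]
  have := congrArg Matrix.det key
  rw [Matrix.det_mul, Matrix.det_mul, Matrix.det_fromBlocks_zero₂₁] at this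
  rw [mul_comm P.det _] at this
  exact mul_right_cancel₀ hPne this

lemma detR {d : ℕ} (A B : Matrix (Fin d) (Fin d) ℝ) :
    |(Matrix.fromBlocks A (-B) (-B) (-A)).det|
      = ‖(A.map (Complex.ofReal) + Complex.I • B.map (Complex.ofReal)).det‖ ^ 2 := by
  classical
  set Ac := A.map (Complex.ofReal)
  set Bc := B.map (Complex.ofReal)
  set D := (Ac + Complex.I • Bc).det with hD
  have hmap : ((Matrix.fromBlocks A (-B) (-B) (-A)).map (Complex.ofReal))
      = Matrix.fromBlocks Ac (-Bc) (-Bc) (-Ac) := by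
    ext (i|i) (j|j) <;> simp [Ac, Bc, Matrix.map_apply, Matrix.fromBlocks]
  have h1 : ((Matrix.fromBlocks A (-B) (-B) (-A)).det : ℂ)
      = (Matrix.fromBlocks Ac (-Bc) (-Bc) (-Ac)).det := by
    rw [← hmap]
    exact
      (RingHom.map_det Complex.ofRealHom (Matrix.fromBlocks A (-B) (-B) (-A)))
  have h2 : Matrix.fromBlocks Ac (-Bc) (-Bc) (-Ac)
      = Matrix.fromBlocks (1 : Matrix (Fin d) (Fin d) ℂ) 0 0 (-1)
        * Matrix.fromBlocks Ac (-Bc) Bc Ac := by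
    simp [Matrix.fromBlocks_multiply]
  have h3 : (Ac - Complex.I • Bc).det = (starRingEnd ℂ) D := by
    have : (Ac + Complex.I • Bc).map (starRingEnd ℂ) = Ac - Complex.I • Bc := by
      ext i j
      simp [Ac, Bc, Matrix.map_apply, Matrix.add_apply, Matrix.sub_apply, Matrix.smul_apply,
        smul_eq_mul, Complex.conj_ofReal, sub_eq_add_neg]
    rw [← this]
    simpa [RingHom.mapMatrix_apply] using
      (RingHom.map_det (starRingEnd ℂ) (Ac + Complex.I • Bc)).symm
  have h4 : ((Matrix.fromBlocks A (-B) (-B) (-A)).det : ℂ)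
      = ((-1 : ℝ) ^ d * Complex.normSq D : ℝ) := by
    rw [h1, h2, Matrix.det_mul, Matrix.det_fromBlocks_zero₁₂, detC, h3]
    rw [Matrix.det_one, Matrix.det_neg, Matrix.det_one, Fintype.card_fin]
    push_cast
    rw [Complex.normSq_eq_conj_mul_self]
    ring
  have h5 : (Matrix.fromBlocks A (-B) (-B) (-A)).det = (-1 : ℝ) ^ d * Complex.normSq D :=
    Complex.ofReal_injective h4
  rw [h5, abs_mul, _root_.abs_pow, abs_neg, abs_one, one_pow, one_mul,
    _root_.abs_of_nonneg (Complex.normSq_nonneg D), Complex.sq_norm]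

def toCLM {d : ℕ} : ((Fin d → ℝ) × (Fin d → ℝ)) →L[ℝ] (Fin d → ℂ) :=
  LinearMap.toContinuousLinearMap
    { toFun := toC
      map_add' := by
        intro p q; funext l; simp only [toC, Prod.fst_add, Prod.snd_add, Pi.add_apply]
        push_cast; ring
      map_smul' := by
        intro c p; funext l
        simp only [toC, Prod.smul_fst, Prod.smul_snd, Pi.smul_apply, smul_eq_mul,
          RingHom.id_apply, Complex.real_smul]
        push_cast; ring }

@[simp] lemma toCLM_apply {d : ℕ} (p : (Fin d → ℝ) × (Fin d → ℝ)) : toCLM p = toC p := rfl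

lemma toC_inl {d : ℕ} (i : Fin d) :
    toC (stdBasis (Sum.inl i)) = Pi.single i (1 : ℂ) := by
  funext l
  simp [toC, stdBasis, Pi.single_apply, apply_ite]

lemma toC_inr {d : ℕ} (i : Fin d) :
    toC (stdBasis (Sum.inr i)) = Complex.I • (Pi.single i 1 : Fin d → ℂ) := by
  funext l
  rcases eq_or_ne l i with rfl | hl
  · simp [toC, stdBasis]
  · simp [toC, stdBasis, Pi.single_apply, hl]

lemma hessianEntry {d : ℕ} (h : (Fin d → ℂ) → ℂ) (z₀ : Fin d → ℂ) (hh : AnalyticAt ℂ h z₀)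
    (p₀ : (Fin d → ℝ) × (Fin d → ℝ)) (hp : toCLM p₀ = z₀) (a b : Fin d ⊕ Fin d) :
    realHessian (fun p => (h (toCLM p)).re) p₀ a b
      = (fderiv ℂ (fderiv ℂ h) z₀ (toCLM (stdBasis a)) (toCLM (stdBasis b))).re := by
  subst hp
  have hev : ∀ᶠ q in nhds p₀, AnalyticAt ℂ h (toCLM q) := by
    exact (toCLM.continuous.continuousAt).eventually hh.eventually_analyticAt
  set w := toCLM (stdBasis b) with hw
  have step : ∀ᶠ q in nhds p₀, fderiv ℝ (fun p => (h (toCLM p)).re) q (stdBasis b)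
      = (fderiv ℂ h (toCLM q) w).re := by
    filter_upwards [hev] with q hq
    have hD : HasFDerivAt h (fderiv ℂ h (toCLM q)) (toCLM q) :=
      hq.differentiableAt.hasFDerivAt
    have h1 : HasFDerivAt (fun p => h (toCLM p))
        (((fderiv ℂ h (toCLM q)).restrictScalars ℝ).comp toCLM) q :=
      (hD.restrictScalars ℝ).comp q toCLM.hasFDerivAt
    have h2 : HasFDerivAt (fun p => (h (toCLM p)).re)
        (Complex.reCLM.comp (((fderiv ℂ h (toCLM q)).restrictScalars ℝ).comp toCLM)) q :=
      Complex.reCLM.hasFDerivAt.comp q h1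
    rw [h2.fderiv]
    rfl
  have hf2 : HasFDerivAt (fderiv ℂ h) (fderiv ℂ (fderiv ℂ h) (toCLM p₀)) (toCLM p₀) :=
    hh.fderiv.differentiableAt.hasFDerivAt
  have h3 : HasFDerivAt (fun z => fderiv ℂ h z w)
      ((fderiv ℂ (fderiv ℂ h) (toCLM p₀)).flip w) (toCLM p₀) := by
    simpa using hf2.clm_apply (hasFDerivAt_const w (toCLM p₀))
  have h4 : HasFDerivAt (fun q => fderiv ℂ h (toCLM q) w)
      ((((fderiv ℂ (fderiv ℂ h) (toCLM p₀)).flip w).restrictScalars ℝ).comp toCLM) p₀ :=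
    (h3.restrictScalars ℝ).comp p₀ toCLM.hasFDerivAt
  have h5 : HasFDerivAt (fun q => (fderiv ℂ h (toCLM q) w).re)
      (Complex.reCLM.comp
        ((((fderiv ℂ (fderiv ℂ h) (toCLM p₀)).flip w).restrictScalars ℝ).comp toCLM)) p₀ :=
    Complex.reCLM.hasFDerivAt.comp p₀ h4
  have h6 : fderiv ℝ (fun q => fderiv ℝ (fun p => (h (toCLM p)).re) q (stdBasis b)) p₀
      = fderiv ℝ (fun q => (fderiv ℂ h (toCLM q) w).re) p₀ :=
    Filter.EventuallyEq.fderiv_eq step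
  show fderiv ℝ (fun q => fderiv ℝ (fun p => (h (toCLM p)).re) q (stdBasis b)) p₀ (stdBasis a)
      = _
  rw [h6, h5.fderiv]
  simp

lemma cHessian_eq {d : ℕ} (h : (Fin d → ℂ) → ℂ) (z₀ : Fin d → ℂ) (hh : AnalyticAt ℂ h z₀)
    (i j : Fin d) :
    cHessian h z₀ i j
      = fderiv ℂ (fderiv ℂ h) z₀ (Pi.single i 1) (Pi.single j 1) := by
  have hf2 : HasFDerivAt (fderiv ℂ h) (fderiv ℂ (fderiv ℂ h) z₀) z₀ :=
    hh.fderiv.differentiableAt.hasFDerivAt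
  have h3 : HasFDerivAt (fun z => fderiv ℂ h z (Pi.single j 1))
      ((fderiv ℂ (fderiv ℂ h) z₀).flip (Pi.single j 1)) z₀ := by
    simpa using hf2.clm_apply (hasFDerivAt_const (Pi.single j (1:ℂ)) z₀)
  show fderiv ℂ (fun u => fderiv ℂ h u (Pi.single j 1)) z₀ (Pi.single i 1) = _
  rw [h3.fderiv]
  simp

lemma cHessian_const_mul {d : ℕ} (φ : (Fin d → ℂ) → ℂ) (z₀ : Fin d → ℂ)
    (hφ : AnalyticAt ℂ φ z₀) (c : ℂ) :
    cHessian (fun z => c * φ z) z₀ = c • cHessian φ z₀ := by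
  ext i j
  have hev : ∀ᶠ u in nhds z₀, AnalyticAt ℂ φ u := hφ.eventually_analyticAt
  have step : ∀ᶠ u in nhds z₀, fderiv ℂ (fun z => c * φ z) u (Pi.single j 1)
      = c * fderiv ℂ φ u (Pi.single j 1) := by
    filter_upwards [hev] with u hu
    rw [fderiv_const_mul hu.differentiableAt c]
    simp
  have hdiff : DifferentiableAt ℂ (fun u => fderiv ℂ φ u (Pi.single j 1)) z₀ := by
    exact hφ.fderiv.differentiableAt.clm_apply (differentiableAt_const _)
  show fderiv ℂ (fun u => fderiv ℂ (fun z => c * φ z) u (Pi.single j 1)) z₀ (Pi.single i 1)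
      = c * cHessian φ z₀ i j
  rw [Filter.EventuallyEq.fderiv_eq step, fderiv_const_mul hdiff c]
  rfl

/-- Equation (2.5) of the paper: if `φ` is holomorphic at `z₀` and
`φ = φ₁ + i φ₂`, then the determinant of the real Hessian of
`s φ₁ + t φ₂` at `z₀` has absolute value `(s² + t²)^{n-1} |det Hφ(z₀)|²`. -/
theorem real_hessian_det_of_holomorphic {d : ℕ} (φ : (Fin d → ℂ) → ℂ)
    (z₀ : Fin d → ℂ) (hφ : AnalyticAt ℂ φ z₀) (s t : ℝ) :
    |(realHessian
        (fun p => s * (φ (toC p)).re + t * (φ (toC p)).im)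
        (fun l => (z₀ l).re, fun l => (z₀ l).im)).det|
      = (s ^ 2 + t ^ 2) ^ d * ‖(cHessian φ z₀).det‖ ^ 2 := by
  set c : ℂ := (s : ℂ) - (t : ℂ) * Complex.I with hc
  set h : (Fin d → ℂ) → ℂ := fun z => c * φ z with hhdef
  have hh : AnalyticAt ℂ h z₀ := analyticAt_const.mul hφ
  set p₀ : (Fin d → ℝ) × (Fin d → ℝ) := (fun l => (z₀ l).re, fun l => (z₀ l).im) with hp₀
  have hp : toCLM p₀ = z₀ := by
    funext l
    simp only [toCLM_apply, toC, hp₀]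
    exact Complex.re_add_im _
  have hg : (fun p => s * (φ (toC p)).re + t * (φ (toC p)).im)
      = fun p => (h (toCLM p)).re := by
    funext p
    simp only [hhdef, toCLM_apply, hc, Complex.mul_re, Complex.sub_re, Complex.sub_im,
      Complex.mul_im, Complex.ofReal_re, Complex.ofReal_im, Complex.I_re, Complex.I_im]
    ring
  rw [hg]
  set H := cHessian h z₀ with hH
  have hent : realHessian (fun p => (h (toCLM p)).re) p₀
      = Matrix.fromBlocks (H.map Complex.re) (-(H.map Complex.im))
          (-(H.map Complex.im)) (-(H.map Complex.re)) := by
    ext a b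
    obtain (i | i) := a <;> obtain (j | j) := b <;>
      rw [hessianEntry h z₀ hh p₀ hp _ _] <;>
      simp [toC_inl, toC_inr, Matrix.fromBlocks, map_smul,
        ContinuousLinearMap.smul_apply, smul_eq_mul, Complex.mul_re,
        ← cHessian_eq h z₀ hh, hH]
  rw [hent, detR (H.map Complex.re) (H.map Complex.im)]
  have hHmap : (H.map Complex.re).map Complex.ofReal
      + Complex.I • (H.map Complex.im).map Complex.ofReal = H := by
    ext i j
    simp only [Matrix.add_apply, Matrix.map_apply, Matrix.smul_apply, smul_eq_mul]
    rw [mul_comm]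
    exact Complex.re_add_im _
  rw [hHmap]
  have hHc : H = c • cHessian φ z₀ := by
    rw [hH, hhdef]
    exact cHessian_const_mul φ z₀ hφ c
  have habs : ‖c‖ ^ 2 = s ^ 2 + t ^ 2 := by
    rw [Complex.sq_norm]
    simp [hc, Complex.normSq_apply]
    ring
  rw [hHc, Matrix.det_smul, Fintype.card_fin, norm_mul, norm_pow, mul_pow, ← pow_mul,
    mul_comm d 2, pow_mul, habs]
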